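/- Let φ: ℕ → (0,1) be non-increasing and let μ be the distribution of Σ_{n≥1} X_n·2^{−n} with X_n independent, P(X_n=0) = (1+φ(n))/2, P(X_n=1) = (1−φ(n))/2. Then for every m ≥ 1, |μ̂(2^m)|² ≥ (4/π²)·φ²(m+1). In particular, the Fourier decay rate of μ along powers of 2 is at least (2/π)·φ(m+1). -/

import Mathlib

open Real MeasureTheory

private lemma viete_partial (N : ℕ) :
    ∏ j ∈ Finset.range N, Real.cos (π / 2 ^ (j + 2)) =
      1 / (2 ^ N * Real.sin (π / 2 ^ (N + 1))) := by
  induction N with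
  | zero => simp
  | succ N ih =>
    have h2 : π / 2 ^ (N + 1) = 2 * (π / 2 ^ (N + 2)) := by
      rw [pow_succ]; ring
    have hsin : Real.sin (π / 2 ^ (N + 1)) =
        2 * Real.sin (π / 2 ^ (N + 2)) * Real.cos (π / 2 ^ (N + 2)) := by
      rw [h2, Real.sin_two_mul]
    have hspos : 0 < Real.sin (π / 2 ^ (N + 2)) := by
      apply Real.sin_pos_of_pos_of_lt_pi
      · positivity
      · have h1 : (1 : ℝ) < 2 ^ (N + 2) := by
          have : (2:ℝ) ^ 0 < 2 ^ (N + 2) := by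
            apply pow_lt_pow_right₀ one_lt_two; omega
          simpa using this
        have := div_lt_div_of_pos_left pi_pos one_pos h1
        simpa using this
    have hcpos : 0 < Real.cos (π / 2 ^ (N + 2)) := by
      apply Real.cos_pos_of_mem_Ioo
      constructor
      · have : (0:ℝ) < π / 2 ^ (N + 2) := by positivity
        linarith [pi_pos]
      · have h1 : (2 : ℝ) < 2 ^ (N + 2) := by
          have : (2:ℝ) ^ 1 < 2 ^ (N + 2) := by
            apply pow_lt_pow_right₀ one_lt_two; omega
          simpa using this
        exact div_lt_div_of_pos_left pi_pos two_pos h1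
    rw [Finset.prod_range_succ, ih, show N + 1 + 1 = N + 2 by omega, hsin]
    set S := Real.sin (π / 2 ^ (N + 2)) with hS
    set C := Real.cos (π / 2 ^ (N + 2)) with hC
    have hS0 : S ≠ 0 := ne_of_gt hspos
    have hC0 : C ≠ 0 := ne_of_gt hcpos
    rw [pow_succ]
    field_simp

private lemma viete_ge (N : ℕ) :
    2 / π ≤ ∏ j ∈ Finset.range N, Real.cos (π / 2 ^ (j + 2)) := by
  rw [viete_partial]
  have hxpos : (0:ℝ) < π / 2 ^ (N + 1) := by positivity
  have hspos : 0 < Real.sin (π / 2 ^ (N + 1)) := by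
    apply Real.sin_pos_of_pos_of_lt_pi hxpos
    have h1 : (1 : ℝ) < 2 ^ (N + 1) := by
      have : (2:ℝ) ^ 0 < 2 ^ (N + 1) := by
        apply pow_lt_pow_right₀ one_lt_two; omega
      simpa using this
    have := div_lt_div_of_pos_left pi_pos one_pos h1
    simpa using this
  have hsle : Real.sin (π / 2 ^ (N + 1)) ≤ π / 2 ^ (N + 1) :=
    Real.sin_le hxpos.le
  rw [div_le_div_iff₀ pi_pos (by positivity)]
  have hpow : (2:ℝ) ^ (N + 1) = 2 * 2 ^ N := by rw [pow_succ]; ring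
  have h2 : (2:ℝ) ^ N * Real.sin (π / 2 ^ (N + 1)) ≤ 2 ^ N * (π / (2 * 2 ^ N)) := by
    apply mul_le_mul_of_nonneg_left _ (by positivity)
    rw [← hpow]; exact hsle
  have hp : (0:ℝ) < 2 ^ N := by positivity
  have : (2:ℝ) ^ N * (π / (2 * 2 ^ N)) = π / 2 := by field_simp
  nlinarith

private lemma aux_tprod (m : ℕ) (c : ℕ → ℂ) (p : ℝ) (hp : 0 < p) (hp1 : p < 1)
    (h1 : ∀ n, n < m → c n = 1) (hcm : c m = (p : ℂ))
    (htail : ∀ j : ℕ, Real.cos (π / 2 ^ (j + 2)) ≤ ‖c (m + 1 + j)‖) :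
    (4 / π ^ 2) * p ^ 2 ≤ ‖∏' n, c n‖ ^ 2 := by
  have hpi : (0:ℝ) < π := pi_pos
  have hpi3 : (3:ℝ) < π := pi_gt_three
  have hcosnn : ∀ i : ℕ, 0 ≤ Real.cos (π / 2 ^ (i + 2)) := by
    intro i
    apply Real.cos_nonneg_of_mem_Icc
    constructor
    · have : (0:ℝ) < π / 2 ^ (i + 2) := by positivity
      linarith
    · have h1' : (2 : ℝ) ≤ 2 ^ (i + 2) := by
        have : (2:ℝ) ^ 1 ≤ 2 ^ (i + 2) := by
          apply pow_le_pow_right₀ one_le_two; omega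
        simpa using this
      exact div_le_div_of_nonneg_left hpi.le two_pos h1'
  by_cases hmul : Multipliable c
  · have hnorm : HasProd (fun n => ‖c n‖) ‖∏' n, c n‖ := hmul.hasProd.norm
    have key : 2 / π * p ≤ ‖∏' n, c n‖ := by
      apply ge_of_tendsto' hnorm.tendsto_prod_nat
      intro N
      rcases le_or_gt N m with hN | hN
      · have hone : ∏ i ∈ Finset.range N, ‖c i‖ = 1 :=
          Finset.prod_eq_one (fun i hi => by
            rw [h1 i (lt_of_lt_of_le (Finset.mem_range.mp hi) hN), norm_one])
        rw [hone]
        have h2p : 2 / π < 1 := by rw [div_lt_one hpi]; linarith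
        calc 2 / π * p ≤ 1 * 1 := mul_le_mul h2p.le hp1.le hp.le zero_le_one
          _ = 1 := by ring
      · obtain ⟨K, rfl⟩ : ∃ K, N = (m + 1) + K := ⟨N - (m + 1), by omega⟩
        rw [Finset.prod_range_add]
        have hfirst : ∏ i ∈ Finset.range (m + 1), ‖c i‖ = p := by
          rw [Finset.prod_range_succ,
            Finset.prod_eq_one (fun i hi => by
              rw [h1 i (Finset.mem_range.mp hi), norm_one]), one_mul, hcm,
            Complex.norm_real, Real.norm_of_nonneg hp.le]
        have hsecond : 2 / π ≤ ∏ i ∈ Finset.range K, ‖c (m + 1 + i)‖ := by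
          calc 2 / π ≤ ∏ j ∈ Finset.range K, Real.cos (π / 2 ^ (j + 2)) := viete_ge K
            _ ≤ ∏ i ∈ Finset.range K, ‖c (m + 1 + i)‖ := by
                apply Finset.prod_le_prod
                · intro i _; exact hcosnn i
                · intro i _; exact htail i
        rw [hfirst]
        calc 2 / π * p = p * (2 / π) := by ring
          _ ≤ p * ∏ i ∈ Finset.range K, ‖c (m + 1 + i)‖ :=
              mul_le_mul_of_nonneg_left hsecond hp.le
    have habs : ‖∏' n, c n‖ = ‖∏' n, c n‖ := rfl
    rw [habs]
    have h0 : (0:ℝ) ≤ 2 / π * p := by positivity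
    have hsq : (2 / π * p) ^ 2 ≤ ‖∏' n, c n‖ ^ 2 := by nlinarith [norm_nonneg (∏' n, c n)]
    have hrw : (2 / π * p) ^ 2 = 4 / π ^ 2 * p ^ 2 := by
      rw [mul_pow, div_pow]; norm_num
    linarith [hrw ▸ hsq]
  · rw [tprod_eq_one_of_not_multipliable hmul]
    have habs : ‖(1:ℂ)‖ = 1 := norm_one
    rw [habs, one_pow]
    have hpsq : p ^ 2 < 1 := by nlinarith
    have h4 : 4 / π ^ 2 < 1 := by
      rw [div_lt_one (by positivity)]
      nlinarith
    nlinarith [sq_nonneg p, div_pos (by norm_num : (0:ℝ) < 4) (pow_pos hpi 2)]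

theorem fourier_lower_bound_along_powers_of_two (φ : ℕ → ℝ)
    (hφ : ∀ n, 0 < φ n ∧ φ n < 1) (hanti : ∀ n, φ (n + 1) ≤ φ n)
    (μ : Measure ℝ) [IsProbabilityMeasure μ]
    (hμ : ∀ t : ℝ, (∫ x : ℝ, Complex.exp (2 * (π : ℂ) * Complex.I * (t : ℂ) * (x : ℂ)) ∂μ)
      = ∏' n : ℕ, ((((1 + φ (n + 1)) / 2 : ℝ) : ℂ) +
          (((1 - φ (n + 1)) / 2 : ℝ) : ℂ) *
            Complex.exp (2 * (π : ℂ) * Complex.I * ((t / 2 ^ (n + 1) : ℝ) : ℂ)))) :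
    ∀ m : ℕ, 1 ≤ m →
      (4 / π ^ 2) * φ (m + 1) ^ 2 ≤
        ‖(∫ x : ℝ, Complex.exp
          (2 * (π : ℂ) * Complex.I * (((2 : ℝ) ^ m : ℝ) : ℂ) * (x : ℂ)) ∂μ)‖ ^ 2 := by
  intro m hm
  rw [hμ ((2 : ℝ) ^ m)]
  apply aux_tprod m _ (φ (m + 1)) (hφ (m + 1)).1 (hφ (m + 1)).2
  · -- factors below m equal 1
    intro n hn
    have hx : ((2:ℝ) ^ m / 2 ^ (n + 1)) = ((2 ^ (m - n - 1) : ℕ) : ℝ) := by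
      rw [div_eq_iff (by positivity : ((2:ℝ) ^ (n+1)) ≠ 0)]
      push_cast
      rw [← pow_add]
      congr 1
      omega
    have hexp : Complex.exp (2 * (π : ℂ) * Complex.I *
        (((2:ℝ) ^ m / 2 ^ (n + 1) : ℝ) : ℂ)) = 1 := by
      rw [hx]
      rw [show (2 * (π : ℂ) * Complex.I * (((2 ^ (m - n - 1) : ℕ) : ℝ) : ℂ)) =
          ((2 ^ (m - n - 1) : ℤ) : ℂ) * (2 * π * Complex.I) by push_cast; ring]
      exact Complex.exp_int_mul_two_pi_mul_I _
    rw [hexp, mul_one]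
    push_cast
    ring
  · -- factor at m equals φ (m+1)
    have hx : ((2:ℝ) ^ m / 2 ^ (m + 1)) = (1 / 2 : ℝ) := by
      rw [pow_succ]
      field_simp
    have hexp : Complex.exp (2 * (π : ℂ) * Complex.I *
        (((2:ℝ) ^ m / 2 ^ (m + 1) : ℝ) : ℂ)) = -1 := by
      rw [hx]
      rw [show (2 * (π : ℂ) * Complex.I * (((1 / 2 : ℝ)) : ℂ)) = π * Complex.I by
        push_cast; ring]
      exact Complex.exp_pi_mul_I
    rw [hexp]
    push_cast
    ring
  · -- tail factors
    intro j
    set p : ℝ := φ (m + 1 + j + 1) with hpdef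
    have hp0 : 0 < p := (hφ _).1
    have hp1 : p < 1 := (hφ _).2
    have hx : ((2:ℝ) ^ m / 2 ^ (m + 1 + j + 1)) = (1 / 2 ^ (j + 2) : ℝ) := by
      rw [show m + 1 + j + 1 = m + (j + 2) by omega, pow_add]
      field_simp
    set u : ℝ := π / 2 ^ (j + 2) with hu
    have hθ : 2 * π * (1 / 2 ^ (j + 2) : ℝ) = 2 * u := by
      rw [hu]; field_simp
    have hexp : Complex.exp (2 * (π : ℂ) * Complex.I *
        (((2:ℝ) ^ m / 2 ^ (m + 1 + j + 1) : ℝ) : ℂ)) =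
        ((Real.cos (2 * u) : ℝ) : ℂ) + ((Real.sin (2 * u) : ℝ) : ℂ) * Complex.I := by
      rw [hx]
      rw [show (2 * (π : ℂ) * Complex.I * (((1 / 2 ^ (j + 2) : ℝ)) : ℂ)) =
          (((2 * π * (1 / 2 ^ (j + 2) : ℝ) : ℝ)) : ℂ) * Complex.I by push_cast; ring]
      rw [hθ, Complex.exp_mul_I]
      push_cast
      ring
    rw [hexp]
    have heq : (((1 + p) / 2 : ℝ) : ℂ) + (((1 - p) / 2 : ℝ) : ℂ) *
        (((Real.cos (2 * u) : ℝ) : ℂ) + ((Real.sin (2 * u) : ℝ) : ℂ) * Complex.I) =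
        (((1 + p) / 2 + (1 - p) / 2 * Real.cos (2 * u) : ℝ) : ℂ) +
          (((1 - p) / 2 * Real.sin (2 * u) : ℝ) : ℂ) * Complex.I := by
      push_cast; ring
    rw [heq]
    have hsq : ‖(((1 + p) / 2 + (1 - p) / 2 * Real.cos (2 * u) : ℝ) : ℂ) +
        (((1 - p) / 2 * Real.sin (2 * u) : ℝ) : ℂ) * Complex.I‖ ^ 2 =
        ((1 + p) / 2 + (1 - p) / 2 * Real.cos (2 * u)) ^ 2 +
          ((1 - p) / 2 * Real.sin (2 * u)) ^ 2 := by
      rw [← Complex.normSq_add_mul_I, Complex.sq_norm]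
    have hcos2 : Real.cos (2 * u) = 2 * Real.cos u ^ 2 - 1 := Real.cos_two_mul u
    have hsin2 : Real.sin (2 * u) ^ 2 = 1 - Real.cos (2 * u) ^ 2 := by
      nlinarith [Real.sin_sq_add_cos_sq (2 * u)]
    have hc1 : Real.cos (2 * u) ≤ 1 := Real.cos_le_one _
    have hcu : 0 ≤ Real.cos u := by
      apply Real.cos_nonneg_of_mem_Icc
      constructor
      · have : (0:ℝ) < u := by rw [hu]; positivity
        linarith [pi_pos]
      · have h1' : (2 : ℝ) ≤ 2 ^ (j + 2) := by
          have : (2:ℝ) ^ 1 ≤ 2 ^ (j + 2) := by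
            apply pow_le_pow_right₀ one_le_two; omega
          simpa using this
        rw [hu]
        exact div_le_div_of_nonneg_left pi_pos.le two_pos h1'
    have habs0 : 0 ≤ ‖(((1 + p) / 2 + (1 - p) / 2 * Real.cos (2 * u) : ℝ) : ℂ) +
        (((1 - p) / 2 * Real.sin (2 * u) : ℝ) : ℂ) * Complex.I‖ := norm_nonneg _
    nlinarith [hsq, hsin2, hcos2, hcu, habs0, hc1, sq_nonneg (1 - p), sq_nonneg p]
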